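/- Let Φ : ℝ^p → ℝ be C², let μ : ℝ^p → ℝ^p and σ-derived θ = σσᵀ be affine with θ(x) = A^0 + Σ_i A^i x_i, and suppose ∇Φ(x)θ(x) = Φ(x)vᵀ for a constant vector v ∈ ℝ^p and all x. Then tr(∇²Φ(x) θ(x)) − Φ(x)^{-1} ∇Φ(x) θ(x) (∇Φ(x))ᵀ = −∇Φ(x) Σ_{i=1}^p (A^i)^i for all x with Φ(x) ≠ 0, where (A^i)^i denotes the i-th column of A^i. -/

import Mathlib

open Matrix

/-- Let `Φ` be `C²`, let `θ(x) = A⁰ + ∑ᵢ Aⁱ xᵢ` be an affine matrix function, and suppose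
`∇Φ(x) θ(x) = Φ(x) vᵀ` for a constant vector `v` and all `x`. Then for all `x` with
`Φ(x) ≠ 0`,
`tr(∇²Φ(x) θ(x)) - Φ(x)⁻¹ ∇Φ(x) θ(x) (∇Φ(x))ᵀ = -∇Φ(x) ∑ᵢ (Aⁱ)ⁱ`,
where `(Aⁱ)ⁱ` is the `i`-th column of `Aⁱ`. -/
theorem stmt16 (p : ℕ) (Φ : (Fin p → ℝ) → ℝ) (hΦ : ContDiff ℝ 2 Φ)
    (A0 : Matrix (Fin p) (Fin p) ℝ) (A : Fin p → Matrix (Fin p) (Fin p) ℝ)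
    (θ : (Fin p → ℝ) → Matrix (Fin p) (Fin p) ℝ)
    (hθ : ∀ x, θ x = A0 + ∑ i, x i • A i)
    (v : Fin p → ℝ)
    (hgrad : ∀ x, Matrix.vecMul (fun i => fderiv ℝ Φ x (Pi.single i 1)) (θ x) =
      fun i => Φ x * v i) :
    ∀ x, Φ x ≠ 0 →
      Matrix.trace
          ((Matrix.of fun i j =>
            iteratedFDeriv ℝ 2 Φ x ![Pi.single i 1, Pi.single j 1]) * θ x) -
        (Φ x)⁻¹ * ((fun i => fderiv ℝ Φ x (Pi.single i 1)) ⬝ᵥ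
          (θ x).mulVec (fun i => fderiv ℝ Φ x (Pi.single i 1))) =
      -((fun i => fderiv ℝ Φ x (Pi.single i 1)) ⬝ᵥ ∑ i, (fun r => A i r i)) := by
  intro x hx
  set e : Fin p → (Fin p → ℝ) := fun i => Pi.single i 1 with he
  have hd1 : Differentiable ℝ Φ := hΦ.differentiable (by norm_num)
  have hd2 : Differentiable ℝ (fderiv ℝ Φ) :=
    (hΦ.fderiv_right (m := 1) (by norm_num)).differentiable (by norm_num)
  -- second derivative matrix
  set H : Matrix (Fin p) (Fin p) ℝ :=
    Matrix.of fun i j => fderiv ℝ (fderiv ℝ Φ) x (e i) (e j) with hH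
  -- derivative of the linear θ entry
  have hθentry : ∀ k j : Fin p, HasFDerivAt (fun y => θ y k j)
      (∑ m, (A m k j) • (ContinuousLinearMap.proj (R := ℝ) (φ := fun _ : Fin p => ℝ) m)) x := by
    intro k j
    have : (fun y => θ y k j) = fun y : Fin p → ℝ => A0 k j + ∑ m, y m * A m k j := by
      funext y
      simp [hθ y, Matrix.sum_apply]
    rw [this]
    refine (HasFDerivAt.fun_sum (fun m _ => ?_)).const_add (A0 k j)
    have := ((ContinuousLinearMap.proj (R := ℝ) (φ := fun _ : Fin p => ℝ) m).hasFDerivAt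
      (x := x)).mul_const (A m k j)
    simpa [smul_smul, mul_comm] using this
  -- derivative of the gradient component
  have hG : ∀ k : Fin p, HasFDerivAt (fun y => fderiv ℝ Φ y (e k))
      ((ContinuousLinearMap.apply ℝ ℝ (e k)).comp (fderiv ℝ (fderiv ℝ Φ) x)) x := by
    intro k
    exact (ContinuousLinearMap.apply ℝ ℝ (e k)).hasFDerivAt.comp x (hd2 x).hasFDerivAt
  -- key identity from differentiating hgrad, for each j, in direction e j
  have key : ∀ j : Fin p, (∑ k, (H j k * θ x k j + fderiv ℝ Φ x (e k) * A j k j))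
      = v j * fderiv ℝ Φ x (e j) := by
    intro j
    have hL : HasFDerivAt (fun y => ∑ k, fderiv ℝ Φ y (e k) * θ y k j)
        (∑ k, ((fderiv ℝ Φ x (e k)) •
            (∑ m, (A m k j) • (ContinuousLinearMap.proj (R := ℝ) (φ := fun _ : Fin p => ℝ) m))
          + (θ x k j) • ((ContinuousLinearMap.apply ℝ ℝ (e k)).comp
              (fderiv ℝ (fderiv ℝ Φ) x)))) x := by
      refine HasFDerivAt.fun_sum (fun k _ => ?_)
      have := (hG k).fun_mul (hθentry k j)
      simpa [add_comm] using this
    have hfun : (fun y => ∑ k, fderiv ℝ Φ y (e k) * θ y k j) = fun y => Φ y * v j := by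
      funext y
      have := congrFun (hgrad y) j
      simpa [Matrix.vecMul, dotProduct, he] using this
    have hR : HasFDerivAt (fun y => Φ y * v j) ((v j) • fderiv ℝ Φ x) x := by
      simpa [smul_smul] using (hd1 x).hasFDerivAt.mul_const (v j)
    rw [hfun] at hL
    have hEq := hL.unique hR
    have := congrArg (fun (L : (Fin p → ℝ) →L[ℝ] ℝ) => L (e j)) hEq
    simp only [ContinuousLinearMap.sum_apply, ContinuousLinearMap.add_apply,
      ContinuousLinearMap.smul_apply, ContinuousLinearMap.comp_apply,
      ContinuousLinearMap.apply_apply, ContinuousLinearMap.proj_apply] at this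
    calc ∑ k, (H j k * θ x k j + fderiv ℝ Φ x (e k) * A j k j)
        = ∑ k, ((fderiv ℝ Φ x (e k)) • (∑ m, A m k j • (e j) m) + θ x k j • (fderiv ℝ (fderiv ℝ Φ) x (e j) (e k))) := by
          refine Finset.sum_congr rfl fun k _ => ?_
          simp only [he, Pi.single_apply, smul_eq_mul, hH, Matrix.of_apply,
            mul_ite, mul_one, mul_zero, Finset.sum_ite_eq', Finset.mem_univ, if_true]
          ring
      _ = v j • fderiv ℝ Φ x (e j) := this
      _ = v j * fderiv ℝ Φ x (e j) := rfl
  have hkey : (∑ j, ∑ k, H j k * θ x k j) + (∑ j, ∑ k, fderiv ℝ Φ x (e k) * A j k j)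
      = ∑ j, v j * fderiv ℝ Φ x (e j) := by
    rw [← Finset.sum_add_distrib]
    refine Finset.sum_congr rfl fun j _ => ?_
    rw [← Finset.sum_add_distrib]
    exact key j
  have h1 : Matrix.trace
      ((Matrix.of fun i j => iteratedFDeriv ℝ 2 Φ x ![Pi.single i 1, Pi.single j 1]) * θ x)
      = ∑ j, ∑ k, H j k * θ x k j := by
    simp [Matrix.trace, Matrix.mul_apply, Matrix.diag, hH, iteratedFDeriv_two_apply, he]
  have h2 : (fun i => fderiv ℝ Φ x (Pi.single i 1)) ⬝ᵥ (∑ i, (fun r => A i r i))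
      = ∑ j, ∑ k, fderiv ℝ Φ x (e k) * A j k j := by
    simp only [dotProduct, Finset.sum_apply, Finset.mul_sum, he]
    rw [Finset.sum_comm]
  have h3 : (Φ x)⁻¹ * ((fun i => fderiv ℝ Φ x (Pi.single i 1)) ⬝ᵥ
      (θ x).mulVec (fun i => fderiv ℝ Φ x (Pi.single i 1)))
      = ∑ j, v j * fderiv ℝ Φ x (e j) := by
    rw [dotProduct_mulVec, hgrad x]
    simp only [dotProduct, he, Finset.mul_sum]
    refine Finset.sum_congr rfl fun j _ => ?_
    field_simp
  rw [h1, h2, h3]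
  linarith [hkey]
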